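/- Fix k ≥ 1 and let C = (F, Init, P) be a deterministic transition system over input type I and state type S, with I nonempty. Then the witness system C'_k of C simulates C (semantic stratified simulation) via the projection π (ℓ, x, b) = ℓ(k-1); that is: (reset) π maps the initial states of C'_k into Init, and every s ∈ Init has a preimage among the initial states of C'_k under π; (transition) π (F'_k i w) = F i (π w) for every input i and every witness state w; (property) P'_k i w implies P i (π w) for every input i and every witness state w. -/
import Mathlib


/-- A (deterministic) trace: `s (n+1) = F (x n) (s n)` for all `n`. -/
def IsTrace {I S : Type*} (F : I → S → S) (x : ℕ → I) (s : ℕ → S) : Prop :=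
  ∀ n, s (n + 1) = F (x n) (s n)

/-- The system `(F, Init, P)` is safe: every initialized trace satisfies the property. -/
def Safe {I S : Type*} (F : I → S → S) (Init : Set S) (P : I → S → Prop) : Prop :=
  ∀ x s, IsTrace F x s → s 0 ∈ Init → ∀ n, P (x n) (s n)

/-- `P` is `k`-inductive in `(F, Init, P)`: BMC of depth `k-1` and consecution of depth `k`. -/
def KInductive {I S : Type*} (k : ℕ) (F : I → S → S) (Init : Set S) (P : I → S → Prop) :
    Prop :=
  (∀ x s, IsTrace F x s → s 0 ∈ Init → ∀ n < k, P (x n) (s n)) ∧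
  (∀ x s, IsTrace F x s → (∀ n < k, P (x n) (s n)) → P (x k) (s k))

/-- The state type of the witness system: `k` copies of the latches,
`k-1` copies of the inputs, and `k` initialization bits. -/
abbrev WState (k : ℕ) (I S : Type*) : Type _ :=
  (Fin k → S) × (Fin (k - 1) → I) × (Fin k → Bool)

/-- The transition function of the witness system. -/
def WTrans {I S : Type*} (k : ℕ) (F : I → S → S) (i : I) (w : WState k I S) :
    WState k I S :=
  ⟨fun j => if _h : (j : ℕ) = k - 1 then F i (w.1 j) else w.1 ⟨(j : ℕ) + 1, by omega⟩,
   fun j => if _h : (j : ℕ) = k - 2 then i else w.2.1 ⟨(j : ℕ) + 1, by omega⟩,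
   fun j => if _h : (j : ℕ) = k - 1 then w.2.2 j else w.2.2 ⟨(j : ℕ) + 1, by omega⟩⟩

/-- The initial states of the witness system. -/
def WInit (k : ℕ) (hk : 0 < k) (I : Type*) {S : Type*} (Init : Set S) :
    Set (WState k I S) :=
  {w | w.1 ⟨k - 1, by omega⟩ ∈ Init ∧ w.2.2 ⟨k - 1, by omega⟩ = true ∧
       ∀ j : Fin k, (j : ℕ) < k - 1 → w.2.2 j = false}

/-- The extended input sequence `X`: `X j = x j` for `j < k - 1` and `X (k-1) = i`. -/
def WX {I : Type*} (k : ℕ) (i : I) (x : Fin (k - 1) → I) (j : Fin k) : I :=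
  if h : (j : ℕ) = k - 1 then i else x ⟨(j : ℕ), by omega⟩

/-- The property of the witness system: the conjunction of `p0`–`p4`. -/
def WProp {I S : Type*} (k : ℕ) (hk : 0 < k) (F : I → S → S) (Init : Set S)
    (P : I → S → Prop) (i : I) (w : WState k I S) : Prop :=
  (∀ j : Fin k, ∀ hj : (j : ℕ) < k - 1,
      w.2.2 j = true → w.2.2 ⟨(j : ℕ) + 1, by omega⟩ = true) ∧
  (∀ j : Fin k, ∀ hj : (j : ℕ) < k - 1,
      w.2.2 j = true → w.1 ⟨(j : ℕ) + 1, by omega⟩ = F (WX k i w.2.1 j) (w.1 j)) ∧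
  (∀ j : Fin k, w.2.2 j = true → P (WX k i w.2.1 j) (w.1 j)) ∧
  (∀ j : Fin k, 1 ≤ (j : ℕ) →
      w.2.2 ⟨(j : ℕ) - 1, by omega⟩ = false → w.2.2 j = true → w.1 j ∈ Init) ∧
  (w.2.2 ⟨k - 1, by omega⟩ = true)

/-- The witness system `C'_k` simulates `C` via the projection
`π (ℓ, x, b) = ℓ (k-1)` (semantic stratified simulation). -/
theorem witness_simulates (k : ℕ) (hk : 0 < k)
    {I S : Type*} [Nonempty I]
    (F : I → S → S) (Init : Set S) (P : I → S → Prop) :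
    (∀ w ∈ WInit k hk I Init, w.1 ⟨k - 1, by omega⟩ ∈ Init) ∧
    (∀ s ∈ Init, ∃ w ∈ WInit k hk I Init, w.1 ⟨k - 1, by omega⟩ = s) ∧
    (∀ (i : I) (w : WState k I S),
        (WTrans k F i w).1 ⟨k - 1, by omega⟩ = F i (w.1 ⟨k - 1, by omega⟩)) ∧
    (∀ (i : I) (w : WState k I S),
        WProp k hk F Init P i w → P i (w.1 ⟨k - 1, by omega⟩)) := by
  refine ⟨fun w hw => hw.1, fun s hs => ?_, fun i w => ?_, fun i w h => ?_⟩
  · exact ⟨⟨fun _ => s, fun _ => Classical.arbitrary I,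
      fun j => if (j : ℕ) = k - 1 then true else false⟩,
      ⟨hs, by simp, fun j hj => by simp; omega⟩, rfl⟩
  · simp [WTrans]
  · have := h.2.2.1 ⟨k - 1, by omega⟩ h.2.2.2.2
    simpa [WX] using this
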